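/- Per-iteration identity for product noise under L∞-bounded updates (core of Theorem 3): Let d ∈ ℕ, d ≥ 1, R > 0, and let f₀ : ℝ → ℝ be a probability density function that is symmetric around 0 and non-increasing on [0, ∞). Then ∫_{ℝ^d} ∏_{i=1}^d ( sup_{x_i: |x_i| ≤ R} f₀(w_i − x_i) ) dw = (1 + 2R f₀(0))^d. -/

import Mathlib

open MeasureTheory
open scoped BigOperators

section aux
variable (R : ℝ) (hR : 0 < R) (f0 : ℝ → ℝ)
  (h_nonneg : ∀ x, 0 ≤ f0 x) (h_meas : Measurable f0)
  (h_symm : ∀ x, f0 (-x) = f0 x)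
  (h_mono : ∀ x y, 0 ≤ x → x ≤ y → f0 y ≤ f0 x)

include h_symm h_mono in
lemma f0_le_abs : ∀ a b : ℝ, 0 ≤ a → a ≤ |b| → f0 b ≤ f0 a := by
  intro a b ha hab
  have : f0 b = f0 |b| := by
    rcases abs_choice b with h | h
    · rw [h]
    · rw [h, h_symm]
  rw [this]
  exact h_mono a |b| ha hab

include hR h_nonneg h_symm h_mono in
lemma sup_eq (w : ℝ) : (⨆ x ∈ Set.Icc (-R) R, f0 (w - x)) = f0 (max (|w| - R) 0) := by
  have hband : ∀ x ∈ Set.Icc (-R) R, f0 (w - x) ≤ f0 (max (|w| - R) 0) := by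
    intro x hx
    apply f0_le_abs f0 h_symm h_mono _ _ (le_max_right _ _)
    rw [max_le_iff]
    constructor
    · have : |w| - |x| ≤ |w - x| := abs_sub_abs_le_abs_sub w x
      have hxR : |x| ≤ R := abs_le.2 hx
      linarith
    · exact abs_nonneg _
  -- the clamp point achieves the max
  set c : ℝ := max (-R) (min w R) with hc
  have hcmem : c ∈ Set.Icc (-R) R := by
    constructor
    · exact le_max_left _ _
    · rw [hc, max_le_iff]
      exact ⟨by linarith, min_le_right _ _⟩
  have hach : f0 (w - c) = f0 (max (|w| - R) 0) := by
    rcases le_or_gt w (-R) with h1 | h1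
    · have hcv : c = -R := by
        rw [hc, min_eq_left (by linarith : w ≤ R), max_eq_left h1]
      have habs : |w| = -w := abs_of_nonpos (by linarith)
      have : max (|w| - R) 0 = -w - R := by
        rw [habs, max_eq_left]; linarith
      rw [hcv, this, ← h_symm (w - -R)]
      ring_nf
    · rcases le_or_gt R w with h2 | h2
      · have hcv : c = R := by
          rw [hc, min_eq_right h2, max_eq_right (by linarith)]
        have habs : |w| = w := abs_of_nonneg (by linarith)
        have : max (|w| - R) 0 = w - R := by
          rw [habs, max_eq_left]; linarith
        rw [hcv, this]
      · have hcv : c = w := by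
          rw [hc, min_eq_left h2.le, max_eq_right h1.le]
        have : max (|w| - R) 0 = 0 := by
          rw [max_eq_right]; rcases abs_cases w with ⟨h,_⟩|⟨h,_⟩ <;> linarith
        rw [hcv, this, sub_self]
  apply le_antisymm
  · apply Real.iSup_le _ (h_nonneg _)
    intro x
    show (⨆ _ : x ∈ Set.Icc (-R) R, f0 (w - x)) ≤ _
    rcases em (x ∈ Set.Icc (-R) R) with hx | hx
    · exact (ciSup_pos (f := fun _ => f0 (w - x)) hx).le.trans (hband x hx)
    · simp [hx, Real.iSup_of_isEmpty, h_nonneg]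
  · rw [← hach]
    have hbdd : BddAbove (Set.range fun x => ⨆ _ : x ∈ Set.Icc (-R) R, f0 (w - x)) := by
      refine ⟨f0 (max (|w| - R) 0), ?_⟩
      rintro _ ⟨x, rfl⟩
      rcases em (x ∈ Set.Icc (-R) R) with hx | hx
      · exact (ciSup_pos (f := fun _ => f0 (w - x)) hx).le.trans (hband x hx)
      · simp [hx, h_nonneg]
    calc f0 (w - c) = ⨆ _ : c ∈ Set.Icc (-R) R, f0 (w - c) := (ciSup_pos (f := fun _ => f0 (w - c)) hcmem).symm
      _ ≤ _ := le_ciSup hbdd c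
end aux

lemma oneD_integral (R : ℝ) (hR : 0 < R) (f0 : ℝ → ℝ)
    (h_nonneg : ∀ x, 0 ≤ f0 x) (h_meas : Measurable f0)
    (h_int : ∫ x, f0 x = 1) (h_symm : ∀ x, f0 (-x) = f0 x) :
    ∫ w : ℝ, f0 (max (|w| - R) 0) = 1 + 2 * R * f0 0 := by
  have hint : Integrable f0 := by
    by_contra h
    rw [integral_undef h] at h_int
    norm_num at h_int
  have hdecomp : ∀ w : ℝ, f0 (max (|w| - R) 0) =
      (Set.Icc (-R) R).indicator (fun _ => f0 0) w
      + (Set.Ioi R).indicator (fun w => f0 (w - R)) w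
      + (Set.Iio (-R)).indicator (fun w => f0 (w + R)) w := by
    intro w
    simp only [Set.indicator_apply, Set.mem_Icc, Set.mem_Ioi, Set.mem_Iio]
    rcases le_or_gt w (-R) with h1 | h1
    · rcases lt_or_eq_of_le h1 with h1' | h1'
      · rw [if_neg (by push_neg; intro h; linarith), if_neg (by linarith), if_pos h1']
        have : max (|w| - R) 0 = -(w + R) := by
          rw [abs_of_nonpos (by linarith), max_eq_left (by linarith)]; ring
        rw [this, h_symm]; ring
      · rw [if_pos ⟨le_of_eq h1'.symm, by linarith⟩, if_neg (by linarith), if_neg (by linarith)]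
        have : max (|w| - R) 0 = 0 := by
          rw [abs_of_nonpos (by linarith), max_eq_right (by linarith)]
        rw [this]; ring
    · rcases le_or_gt w R with h2 | h2
      · rw [if_pos ⟨h1.le, h2⟩, if_neg (by linarith), if_neg (by linarith)]
        have : max (|w| - R) 0 = 0 := by
          rw [max_eq_right]; rcases abs_cases w with ⟨h,_⟩|⟨h,_⟩ <;> linarith
        rw [this]; ring
      · rw [if_neg (by push_neg; intro h; linarith), if_pos h2, if_neg (by linarith)]
        have : max (|w| - R) 0 = w - R := by
          rw [abs_of_nonneg (by linarith), max_eq_left (by linarith)]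
        rw [this]; ring
  have hI1 : Integrable ((Set.Icc (-R) R).indicator (fun _ : ℝ => f0 0)) :=
    (integrable_indicator_iff measurableSet_Icc).2
      (integrableOn_const measure_Icc_lt_top.ne)
  have hI2 : Integrable ((Set.Ioi R).indicator (fun w : ℝ => f0 (w - R))) :=
    (integrable_indicator_iff measurableSet_Ioi).2 (hint.comp_sub_right R).integrableOn
  have hI3 : Integrable ((Set.Iio (-R)).indicator (fun w : ℝ => f0 (w + R))) :=
    (integrable_indicator_iff measurableSet_Iio).2 (hint.comp_add_right R).integrableOn
  simp_rw [hdecomp]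
  have hI12 : Integrable (fun w : ℝ => (Set.Icc (-R) R).indicator (fun _ => f0 0) w
      + (Set.Ioi R).indicator (fun w => f0 (w - R)) w) := hI1.add hI2
  rw [integral_add hI12 hI3, integral_add hI1 hI2]
  have e1 : ∫ w, (Set.Icc (-R) R).indicator (fun _ : ℝ => f0 0) w = 2 * R * f0 0 := by
    rw [integral_indicator_const _ measurableSet_Icc, measureReal_def, Real.volume_Icc]
    rw [show R - (-R) = 2 * R by ring, ENNReal.toReal_ofReal (by positivity)]
    simp [mul_comm]
  have e2 : ∫ w, (Set.Ioi R).indicator (fun w : ℝ => f0 (w - R)) w = ∫ x in Set.Ioi (0:ℝ), f0 x := by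
    rw [integral_indicator measurableSet_Ioi]
    have := (measurePreserving_add_right (volume : Measure ℝ) R).setIntegral_preimage_emb
      (measurableEmbedding_addRight R) (fun w => f0 (w - R)) (Set.Ioi R)
    rw [← this]
    have hpre : (· + R) ⁻¹' Set.Ioi R = Set.Ioi (0:ℝ) := by
      ext x; simp [Set.mem_Ioi]
    rw [hpre]
    simp
  have e3 : ∫ w, (Set.Iio (-R)).indicator (fun w : ℝ => f0 (w + R)) w = ∫ x in Set.Iio (0:ℝ), f0 x := by
    rw [integral_indicator measurableSet_Iio]
    have := (measurePreserving_add_right (volume : Measure ℝ) (-R)).setIntegral_preimage_emb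
      (measurableEmbedding_addRight (-R)) (fun w => f0 (w + R)) (Set.Iio (-R))
    rw [← this]
    have hpre : (· + -R) ⁻¹' Set.Iio (-R) = Set.Iio (0:ℝ) := by
      ext x; simp
    rw [hpre]
    simp
  rw [e1, e2, e3]
  have : ∫ x in Set.Iio (0:ℝ), f0 x = ∫ x in Set.Iic (0:ℝ), f0 x :=
    setIntegral_congr_set Iio_ae_eq_Iic
  rw [this]
  have := intervalIntegral.integral_Iic_add_Ioi (b := (0:ℝ)) hint.integrableOn hint.integrableOn
  rw [h_int] at this
  linarith


/-- Per-iteration identity for product noise under `L∞`-bounded updates (core of Theorem 3):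
`∫_{ℝ^d} ∏_{i=1}^d (sup_{|x_i| ≤ R} f₀(w_i - x_i)) dw = (1 + 2R f₀(0))^d`. -/
theorem product_sliding_sup_integral
    (d : ℕ) (hd : 1 ≤ d) (R : ℝ) (hR : 0 < R)
    (f0 : ℝ → ℝ)
    (h_nonneg : ∀ x, 0 ≤ f0 x) (h_meas : Measurable f0)
    (h_int : ∫ x, f0 x = 1)
    (h_symm : ∀ x, f0 (-x) = f0 x)
    (h_mono : ∀ x y, 0 ≤ x → x ≤ y → f0 y ≤ f0 x) :
    (∫ w : Fin d → ℝ, ∏ i, ⨆ x ∈ Set.Icc (-R) R, f0 (w i - x))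
      = (1 + 2 * R * f0 0) ^ d := by
  simp_rw [sup_eq R hR f0 h_nonneg h_symm h_mono]
  rw [volume_pi, MeasureTheory.integral_fintype_prod_eq_pow (fun w : ℝ => f0 (max (|w| - R) 0)),
    oneD_integral R hR f0 h_nonneg h_meas h_int h_symm, Fintype.card_fin]
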